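/- Let f be in the class C and let A, C₀ > 0 be given. Then there is a constant K (depending only on A, C₀ and f) such that for all x ≥ 2 and all s ∈ ℂ with |Re s| ≤ C₀: |Σ_{p ≤ x} e^{s·f(p)} − π(x)·Ψ̂_f(s)| ≤ K·π(x)·(1 + |Im s|)·(log x)^{−2A}, where the sum is over primes p ≤ x and π is the prime-counting function. -/

import Mathlib

open MeasureTheory Filter

noncomputable section

/-- A strongly additive arithmetic function: `f (m * n) = f m + f n` for coprime `m, n`,
and `f (p ^ k) = f p` for every prime `p` and `k ≥ 1`. -/
def StronglyAdditive (f : ℕ → ℝ) : Prop :=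
  (∀ m n : ℕ, Nat.Coprime m n → f (m * n) = f m + f n) ∧
    (∀ p k : ℕ, p.Prime → 1 ≤ k → f (p ^ k) = f p)

/-- The finset of primes `p ≤ x`. -/
def primesBelow (x : ℝ) : Finset ℕ :=
  (Finset.range (⌊x⌋₊ + 1)).filter Nat.Prime

/-- `μ(f;x) = Σ_{p ≤ x} f(p)/p`. -/
def muf (f : ℕ → ℝ) (x : ℝ) : ℝ := ∑ p ∈ primesBelow x, f p / p

/-- `σ²(f;x) = Σ_{p ≤ x} (f(p)²/p)(1 − 1/p)`. -/
def sigma2 (f : ℕ → ℝ) (x : ℝ) : ℝ :=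
  ∑ p ∈ primesBelow x, f p ^ 2 / p * (1 - 1 / p)

/-- `σ(f;x)`. -/
def sigmaf (f : ℕ → ℝ) (x : ℝ) : ℝ := Real.sqrt (sigma2 f x)

/-- `D_f(x;Δ) = (1/x)·#{n ≤ x : f(n) ≥ μ(f;x) + Δ·σ(f;x)}`. -/
def Df (f : ℕ → ℝ) (x Δ : ℝ) : ℝ :=
  (((Finset.Icc 1 ⌊x⌋₊).filter fun n => muf f x + Δ * sigmaf f x ≤ f n).card : ℝ) / x

/-- A (right-continuous, nondecreasing) Stieltjes function is a distribution function if it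
tends to `0` at `−∞` and to `1` at `+∞`. -/
def IsDistributionFunction (Ψ : StieltjesFunction ℝ) : Prop :=
  Tendsto (fun t => Ψ t) atBot (nhds (0 : ℝ)) ∧ Tendsto (fun t => Ψ t) atTop (nhds (1 : ℝ))

/-- `loglog x`. -/
def loglog (x : ℝ) : ℝ := Real.log (Real.log x)

/-- Membership in the class `𝒞`, with associated distribution function `Ψ` (denoted `Ψ_f`). -/
structure InClassC (f : ℕ → ℝ) (Ψ : StieltjesFunction ℝ) : Prop where
  strongAdd : StronglyAdditive f
  pos : ∀ p : ℕ, p.Prime → 0 < f p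
  tail : ∀ A : ℝ, 0 < A → ∃ c : ℝ, 0 < c ∧ ∀ x : ℝ, 2 ≤ x → ∀ t : ℝ, 0 ≤ t →
    (((primesBelow x).filter fun p => t ≤ f p).card : ℝ) ≤
      c * Real.exp (-A * t) * ((primesBelow x).card : ℝ)
  distrib : IsDistributionFunction Ψ
  secondMoment : 0 < ∫ t, t ^ 2 ∂Ψ.measure
  approx : ∀ k : ℝ, 0 < k → ∃ c : ℝ, 0 < c ∧ ∀ x : ℝ, 2 ≤ x → ∀ t : ℝ,
    |(((primesBelow x).filter fun p => f p ≤ t).card : ℝ) / ((primesBelow x).card : ℝ) - Ψ t|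
      ≤ c * Real.log x ^ (-k)

/-- `Ψ̂(v) = ∫ e^{vt} dΨ(t)` (real argument). -/
def psiHat (Ψ : StieltjesFunction ℝ) (v : ℝ) : ℝ := ∫ t, Real.exp (v * t) ∂Ψ.measure

/-- `Ψ̂′(v) = ∫ t·e^{vt} dΨ(t)`. -/
def psiHatD (Ψ : StieltjesFunction ℝ) (v : ℝ) : ℝ := ∫ t, t * Real.exp (v * t) ∂Ψ.measure

/-- `Ψ̂″(v) = ∫ t²·e^{vt} dΨ(t)`. -/
def psiHatDD (Ψ : StieltjesFunction ℝ) (v : ℝ) : ℝ := ∫ t, t ^ 2 * Real.exp (v * t) ∂Ψ.measure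

/-- `v` is the saddle point `v_f(x;Δ)`: the (unique) positive solution of
`Ψ̂′(v)·loglog x = Ψ̂′(0)·loglog x + Δ·(Ψ̂″(0)·loglog x)^{1/2}`. -/
def IsSaddle (Ψ : StieltjesFunction ℝ) (x Δ v : ℝ) : Prop :=
  0 < v ∧ psiHatD Ψ v * loglog x =
    psiHatD Ψ 0 * loglog x + Δ * Real.sqrt (psiHatDD Ψ 0 * loglog x)

/-- `S_f(x;Δ)` expressed in terms of `v = v_f(x;Δ)`. -/
def Sf (Ψ : StieltjesFunction ℝ) (x v : ℝ) : ℝ :=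
  Real.log x ^ (psiHat Ψ v - 1 - v * psiHatD Ψ v) /
    (v * Real.sqrt (2 * Real.pi * psiHatDD Ψ v * loglog x))

/-- `Ψ̂(s) = ∫ e^{st} dΨ(t)` for complex `s`. -/
def psiHatC (Ψ : StieltjesFunction ℝ) (s : ℂ) : ℂ :=
  ∫ t : ℝ, Complex.exp (s * (t : ℂ)) ∂Ψ.measure

/-- `L(f;z) = ∏_p (1 − 1/p)^{Ψ̂(z)}·(1 + e^{z·f(p)}/(p − 1))`, over all primes (complex `z`). -/
def Lc (f : ℕ → ℝ) (Ψ : StieltjesFunction ℝ) (z : ℂ) : ℂ :=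
  ∏' p : {p : ℕ // p.Prime},
    (1 - 1 / (p.1 : ℂ)) ^ psiHatC Ψ z *
      (1 + Complex.exp (z * (f p.1 : ℂ)) / ((p.1 : ℂ) - 1))

section PsiLemmas

variable {f : ℕ → ℝ} {Ψ : StieltjesFunction ℝ} (hf : InClassC f Ψ)

private lemma card_primesBelow_pos {x : ℝ} (hx : 2 ≤ x) : 0 < (primesBelow x).card := by
  refine Finset.card_pos.mpr ⟨2, ?_⟩
  simp only [primesBelow, Finset.mem_filter, Finset.mem_range]
  exact ⟨Nat.lt_succ_of_le (Nat.le_floor (by exact_mod_cast hx)), Nat.prime_two⟩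

private lemma le_of_forall_le_add_log {a b c₁ : ℝ}
    (h : ∀ x : ℝ, 2 ≤ x → a ≤ b + c₁ * Real.log x ^ (-(1:ℝ))) : a ≤ b := by
  have htend : Tendsto (fun x : ℝ => b + c₁ * Real.log x ^ (-(1:ℝ))) atTop (nhds (b + c₁ * 0)) := by
    refine tendsto_const_nhds.add (Tendsto.const_mul _ ?_)
    exact (tendsto_rpow_neg_atTop one_pos).comp Real.tendsto_log_atTop
  have := ge_of_tendsto htend (eventually_atTop.mpr ⟨2, h⟩)
  linarith

include hf

private lemma psi_nonneg (t : ℝ) : 0 ≤ Ψ t :=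
  le_of_tendsto hf.distrib.1 (eventually_atBot.mpr ⟨t, fun s hs => Ψ.mono hs⟩)

private lemma psi_le_one (t : ℝ) : Ψ t ≤ 1 :=
  ge_of_tendsto hf.distrib.2 (eventually_atTop.mpr ⟨t, fun s hs => Ψ.mono hs⟩)

private lemma psi_neg_eq_zero {t : ℝ} (ht : t < 0) : Ψ t = 0 := by
  obtain ⟨c₁, hc₁, h₁⟩ := hf.approx 1 one_pos
  have hle : Ψ t ≤ 0 := by
    refine le_of_forall_le_add_log (c₁ := c₁) fun x hx => ?_
    have h := h₁ x hx t
    have hempty : (primesBelow x).filter (fun p => f p ≤ t) = ∅ := by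
      refine Finset.filter_eq_empty_iff.mpr fun p hp => ?_
      have hprime : p.Prime := (Finset.mem_filter.mp hp).2
      have := hf.pos p hprime
      push_neg
      linarith
    rw [hempty] at h
    simp only [Finset.card_empty, Nat.cast_zero, zero_div, zero_sub, abs_neg] at h
    calc Ψ t ≤ |Ψ t| := le_abs_self _
    _ ≤ c₁ * Real.log x ^ (-(1:ℝ)) := h
    _ = 0 + c₁ * Real.log x ^ (-(1:ℝ)) := by ring
  exact le_antisymm hle (psi_nonneg hf t)

/-- empirical complement count bound -/
private lemma count_ge_le {A' : ℝ} (hA' : 0 < A') {c : ℝ}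
    (htail : ∀ x : ℝ, 2 ≤ x → ∀ t : ℝ, 0 ≤ t →
      (((primesBelow x).filter fun p => t ≤ f p).card : ℝ) ≤
        c * Real.exp (-A' * t) * ((primesBelow x).card : ℝ))
    {x : ℝ} (hx : 2 ≤ x) {t : ℝ} (ht : 0 ≤ t) :
    ((primesBelow x).card : ℝ) - (((primesBelow x).filter fun p => f p ≤ t).card : ℝ)
      ≤ c * Real.exp (-A' * t) * ((primesBelow x).card : ℝ) := by
  have hsplit := Finset.card_filter_add_card_filter_not
    (s := primesBelow x) (p := fun p => f p ≤ t)
  have hsub : ((primesBelow x).filter fun p => ¬ f p ≤ t)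
      ⊆ ((primesBelow x).filter fun p => t ≤ f p) := by
    intro p hp
    rw [Finset.mem_filter] at hp ⊢
    exact ⟨hp.1, le_of_lt (lt_of_not_ge hp.2)⟩
  have hcard := Finset.card_le_card hsub
  have h2 := htail x hx t ht
  have : ((primesBelow x).card : ℝ) - (((primesBelow x).filter fun p => f p ≤ t).card : ℝ)
      = (((primesBelow x).filter fun p => ¬ f p ≤ t).card : ℝ) := by
    have := hsplit
    push_cast [← this]
    ring
  rw [this]
  calc ((((primesBelow x).filter fun p => ¬ f p ≤ t).card : ℕ) : ℝ)
      ≤ (((primesBelow x).filter fun p => t ≤ f p).card : ℝ) := by exact_mod_cast hcard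
    _ ≤ c * Real.exp (-A' * t) * ((primesBelow x).card : ℝ) := h2


/-- tail bound for `Ψ`. -/
private lemma psi_tail {A' : ℝ} (hA' : 0 < A') {c : ℝ} (hc : 0 < c)
    (htail : ∀ x : ℝ, 2 ≤ x → ∀ t : ℝ, 0 ≤ t →
      (((primesBelow x).filter fun p => t ≤ f p).card : ℝ) ≤
        c * Real.exp (-A' * t) * ((primesBelow x).card : ℝ))
    {t : ℝ} (ht : 0 ≤ t) : 1 - Ψ t ≤ c * Real.exp (-A' * t) := by
  obtain ⟨c₁, hc₁, h₁⟩ := hf.approx 1 one_pos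
  refine le_of_forall_le_add_log (c₁ := c₁) fun x hx => ?_
  set n : ℝ := ((primesBelow x).card : ℝ) with hn
  have hnpos : (0:ℝ) < n := by
    rw [hn]; exact_mod_cast card_primesBelow_pos hx
  set C : ℝ := (((primesBelow x).filter fun p => f p ≤ t).card : ℝ) with hC
  have h2 : n - C ≤ c * Real.exp (-A' * t) * n := count_ge_le hf hA' htail hx ht
  have h3 : C / n - Ψ t ≤ c₁ * Real.log x ^ (-(1:ℝ)) := (abs_le.mp (h₁ x hx t)).2
  have h4 : 1 - C / n ≤ c * Real.exp (-A' * t) := by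
    have he : 1 - C / n = (n - C) / n := by field_simp
    rw [he, div_le_iff₀ hnpos]
    exact h2
  linarith

private lemma measure_Iio_zero : Ψ.measure (Set.Iio (0:ℝ)) = 0 := by
  have hcover : Set.Iio (0:ℝ) = ⋃ n : ℕ, Set.Iic (-(1:ℝ)/(n+1)) := by
    ext t
    simp only [Set.mem_Iio, Set.mem_iUnion, Set.mem_Iic]
    constructor
    · intro ht
      obtain ⟨n, hn⟩ := exists_nat_one_div_lt (neg_pos.mpr ht)
      refine ⟨n, ?_⟩
      have e : (-1:ℝ)/((n:ℝ)+1) = -(1/((n:ℝ)+1)) := by ring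
      rw [e]
      linarith
    · rintro ⟨n, hn⟩
      have : -(1:ℝ)/((n:ℝ)+1) < 0 := by
        apply div_neg_of_neg_of_pos
        · norm_num
        · positivity
      linarith
  rw [hcover]
  refine measure_iUnion_null fun n => ?_
  rw [Ψ.measure_Iic hf.distrib.1]
  have hneg : -(1:ℝ)/((n:ℝ)+1) < 0 := by
    apply div_neg_of_neg_of_pos <;> [norm_num; positivity]
  rw [psi_neg_eq_zero hf hneg]
  simp

private lemma ae_nonneg : ∀ᵐ t ∂Ψ.measure, (0:ℝ) ≤ t := by
  rw [ae_iff]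
  have : {t : ℝ | ¬ (0:ℝ) ≤ t} = Set.Iio 0 := by ext t; simp [not_le]
  rw [this]
  exact measure_Iio_zero hf

private lemma measure_Ioi_toReal (u : ℝ) :
    (Ψ.measure (Set.Ioi u)).toReal = 1 - Ψ u := by
  haveI := Ψ.isFiniteMeasure hf.distrib.1 hf.distrib.2
  have h1 : Ψ.measure (Set.Ioi u) = Ψ.measure Set.univ - Ψ.measure (Set.Iic u) := by
    rw [← Set.compl_Iic, measure_compl measurableSet_Iic (measure_ne_top _ _)]
  rw [h1, Ψ.measure_univ hf.distrib.1 hf.distrib.2, Ψ.measure_Iic hf.distrib.1,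
    sub_zero, sub_zero, ← ENNReal.ofReal_sub _ (psi_nonneg hf u),
    ENNReal.toReal_ofReal (by linarith [psi_le_one hf u])]

private lemma prob : IsProbabilityMeasure Ψ.measure := by
  constructor
  rw [Ψ.measure_univ hf.distrib.1 hf.distrib.2]
  norm_num

end PsiLemmas
private lemma contExp (s : ℂ) : Continuous (fun u : ℝ => Complex.exp (s * u)) :=
  Complex.continuous_exp.comp (continuous_const.mul Complex.continuous_ofReal)

private lemma normExp (s : ℂ) (u : ℝ) : ‖Complex.exp (s * u)‖ = Real.exp (s.re * u) := by
  rw [Complex.norm_exp]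
  congr 1
  simp [Complex.mul_re]

private lemma inner_exp_integrable (s : ℂ) (a : ℝ) :
    Integrable (fun u : ℝ => (Set.Iio a).indicator (fun u : ℝ => Complex.exp (s * u)) u)
      (volume.restrict (Set.Ioi (0:ℝ))) := by
  rw [integrable_indicator_iff measurableSet_Iio]
  rw [IntegrableOn, Measure.restrict_restrict measurableSet_Iio]
  have h : Set.Iio a ∩ Set.Ioi 0 = Set.Ioo 0 a := by rw [Set.inter_comm, Set.Ioi_inter_Iio]
  rw [h]
  exact ((contExp s).integrableOn_Ioc).mono_set Set.Ioo_subset_Ioc_self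

private lemma inner_exp_integral {s : ℂ} (hs : s ≠ 0) {a : ℝ} (ha : 0 ≤ a) :
    (∫ u in Set.Ioi (0:ℝ), (Set.Iio a).indicator (fun u : ℝ => Complex.exp (s * u)) u)
      = (Complex.exp (s * a) - 1) / s := by
  rw [setIntegral_indicator measurableSet_Iio, Set.Ioi_inter_Iio,
    ← integral_Ioc_eq_integral_Ioo, ← intervalIntegral.integral_of_le ha,
    integral_exp_mul_complex hs]
  simp

private lemma exp_eq_one_add {s : ℂ} (hs : s ≠ 0) {a : ℝ} (ha : 0 ≤ a) :
    Complex.exp (s * a) =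
      1 + s * ∫ u in Set.Ioi (0:ℝ), (Set.Iio a).indicator (fun u : ℝ => Complex.exp (s * u)) u := by
  rw [inner_exp_integral hs ha]
  field_simp
  ring

private lemma psiHatC_eq {f : ℕ → ℝ} {Ψ : StieltjesFunction ℝ} (hf : InClassC f Ψ)
    {C₀ : ℝ} (hC₀ : 0 < C₀) {c : ℝ} (hc : 0 < c)
    (hΨtail : ∀ t : ℝ, 0 ≤ t → 1 - Ψ t ≤ c * Real.exp (-(C₀+1) * t))
    {s : ℂ} (hs : s ≠ 0) (hre : |s.re| ≤ C₀) :
    Integrable (fun u : ℝ => (1 - Ψ u) • Complex.exp (s * u))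
        (volume.restrict (Set.Ioi (0:ℝ))) ∧
      psiHatC Ψ s = 1 + s * ∫ u in Set.Ioi (0:ℝ), (1 - Ψ u) • Complex.exp (s * u) := by
  haveI := Ψ.isFiniteMeasure hf.distrib.1 hf.distrib.2
  haveI := prob hf
  set μ : Measure ℝ := volume.restrict (Set.Ioi (0:ℝ)) with hμ
  set F : ℝ × ℝ → ℂ :=
    fun q => {q : ℝ × ℝ | q.1 < q.2}.indicator (fun q => Complex.exp (s * q.1)) q with hFdef
  have hFmeasSet : MeasurableSet {q : ℝ × ℝ | q.1 < q.2} :=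
    measurableSet_lt measurable_fst measurable_snd
  have hFmeas : AEStronglyMeasurable F (μ.prod Ψ.measure) := by
    refine (Measurable.indicator ?_ hFmeasSet).aestronglyMeasurable
    exact ((contExp s).measurable).comp measurable_fst
  have hsect : ∀ u : ℝ, (fun t => F (u, t)) =
      (Set.Ioi u).indicator (fun _ => Complex.exp (s * u)) := by
    intro u; funext t
    simp [hFdef, Set.indicator_apply, Set.mem_Ioi, Set.mem_setOf_eq]
  have hsect2 : ∀ t : ℝ, (fun u => F (u, t)) =
      fun u => (Set.Iio t).indicator (fun u : ℝ => Complex.exp (s * u)) u := by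
    intro t; funext u
    simp [hFdef, Set.indicator_apply, Set.mem_Iio, Set.mem_setOf_eq]
  have hW : ∀ u : ℝ, (∫ t, F (u, t) ∂Ψ.measure) = (1 - Ψ u) • Complex.exp (s * u) := by
    intro u
    rw [hsect u, integral_indicator_const _ measurableSet_Ioi, measureReal_def, measure_Ioi_toReal hf u]
  have hint : Integrable F (μ.prod Ψ.measure) := by
    rw [integrable_prod_iff hFmeas]
    constructor
    · refine Filter.Eventually.of_forall fun u => ?_
      rw [hsect u]
      exact (integrable_const _).indicator measurableSet_Ioi
    · have heq : (fun u => ∫ t, ‖F (u, t)‖ ∂Ψ.measure) =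
          fun u => Real.exp (s.re * u) * (1 - Ψ u) := by
        funext u
        have h1 : (fun t => ‖F (u, t)‖) =
            (Set.Ioi u).indicator (fun _ => ‖Complex.exp (s * u)‖) := by
          funext t
          rw [show F (u, t) = (Set.Ioi u).indicator (fun _ => Complex.exp (s * u)) t from
            congrFun (hsect u) t, ← norm_indicator_eq_indicator_norm]
        rw [h1, integral_indicator_const _ measurableSet_Ioi, measureReal_def, measure_Ioi_toReal hf u,
          normExp, smul_eq_mul, mul_comm]
      rw [heq]
      refine Integrable.mono' (g := fun u => c * Real.exp (-u)) ?_ ?_ ?_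
      · have hbase : IntegrableOn (fun u : ℝ => Real.exp (-u)) (Set.Ioi (0:ℝ)) := by
          have := exp_neg_integrableOn_Ioi 0 (b := 1) one_pos
          simpa using this
        exact hbase.const_mul c
      · exact ((Real.measurable_exp.comp (measurable_id.const_mul s.re)).mul
          (measurable_const.sub Ψ.mono.measurable)).aestronglyMeasurable
      · filter_upwards [ae_restrict_mem measurableSet_Ioi] with u hu
        have hu0 : (0:ℝ) ≤ u := le_of_lt hu
        have h1 : 0 ≤ 1 - Ψ u := by linarith [psi_le_one hf u]
        have h2 : Real.exp (s.re * u) * (1 - Ψ u)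
            ≤ Real.exp (C₀ * u) * (c * Real.exp (-(C₀+1) * u)) := by
          refine mul_le_mul ?_ (hΨtail u hu0) h1 (le_of_lt (Real.exp_pos _))
          exact Real.exp_le_exp.mpr (by nlinarith [abs_le.mp hre])
        have h3 : Real.exp (C₀ * u) * (c * Real.exp (-(C₀+1) * u)) = c * Real.exp (-u) := by
          rw [mul_comm (Real.exp (C₀ * u)), mul_assoc, ← Real.exp_add]
          ring_nf
        rw [Real.norm_of_nonneg (by positivity)]
        rw [h3] at h2
        exact h2
  have hswap : (∫ u, ∫ t, F (u, t) ∂Ψ.measure ∂μ) = ∫ t, ∫ u, F (u, t) ∂μ ∂Ψ.measure :=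
    integral_integral_swap (f := fun u t => F (u, t)) hint
  have hWint : Integrable (fun u : ℝ => (1 - Ψ u) • Complex.exp (s * u)) μ := by
    refine (hint.integral_prod_left).congr (Filter.Eventually.of_forall fun u => hW u)
  have hG : Integrable (fun t => ∫ u, F (u, t) ∂μ) Ψ.measure := hint.integral_prod_right
  have hGval : ∀ᵐ t ∂Ψ.measure, (∫ u, F (u, t) ∂μ) = (Complex.exp (s * t) - 1) / s := by
    filter_upwards [ae_nonneg hf] with t ht
    rw [hsect2 t]
    exact inner_exp_integral hs ht
  refine ⟨hWint, ?_⟩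
  have step1 : psiHatC Ψ s = ∫ t, (s * (∫ u, F (u, t) ∂μ) + 1) ∂Ψ.measure := by
    refine integral_congr_ae (hGval.mono fun t h => ?_)
    show Complex.exp (s * t) = s * (∫ u, F (u, t) ∂μ) + 1
    rw [h]
    field_simp
    ring
  have step2 : (∫ t, (s * (∫ u, F (u, t) ∂μ) + 1) ∂Ψ.measure)
      = s * (∫ t, (∫ u, F (u, t) ∂μ) ∂Ψ.measure) + 1 := by
    rw [integral_add (hG.const_mul s) (integrable_const _), integral_const_mul,
      integral_const]
    simp
  rw [step1, step2, ← hswap]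
  have : (∫ u, ∫ t, F (u, t) ∂Ψ.measure ∂μ)
      = ∫ u in Set.Ioi (0:ℝ), (1 - Ψ u) • Complex.exp (s * u) := by
    exact integral_congr_ae (Filter.Eventually.of_forall fun u => hW u)
  rw [this]
  ring
set_option maxHeartbeats 1600000 in
/-- Lemma 4.3: uniformly in `|Re s| ≤ C₀`,
`Σ_{p ≤ x} e^{s f(p)} = π(x)·(Ψ̂_f(s) + O_{A,C₀}((1 + |Im s|)·(log x)^{−2A}))`. -/
theorem stmt15 (f : ℕ → ℝ) (Ψ : StieltjesFunction ℝ) (hf : InClassC f Ψ)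
    (A C₀ : ℝ) (hA : 0 < A) (hC₀ : 0 < C₀) :
    ∃ K : ℝ, 0 < K ∧ ∀ x : ℝ, 2 ≤ x → ∀ s : ℂ, |s.re| ≤ C₀ →
      ‖(∑ p ∈ primesBelow x, Complex.exp (s * (f p : ℂ))) -
          ((primesBelow x).card : ℂ) * psiHatC Ψ s‖
        ≤ K * ((primesBelow x).card : ℝ) * (1 + |s.im|) * Real.log x ^ (-(2 * A)) := by
  classical
  obtain ⟨c, hc, htail⟩ := hf.tail (C₀ + 1) (by linarith)
  have hΨtail : ∀ t : ℝ, 0 ≤ t → 1 - Ψ t ≤ c * Real.exp (-(C₀ + 1) * t) :=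
    fun t ht => psi_tail hf (by linarith) hc htail ht
  set k : ℝ := 2*A*C₀ + 2*A + 1 with hkdef
  have hkpos : 0 < k := by positivity
  obtain ⟨ck, hck, happrox⟩ := hf.approx k hkpos
  have hmaxpos : (0:ℝ) < max C₀ 1 := lt_max_of_lt_right one_pos
  refine ⟨max C₀ 1 * (2*A*ck + 2*c), by positivity, ?_⟩
  intro x hx s hre
  set P := primesBelow x with hP
  set n : ℝ := (P.card : ℝ) with hn
  have hnpos : 0 < n := by rw [hn]; exact_mod_cast card_primesBelow_pos hx
  have hlogpos : 0 < Real.log x := Real.log_pos (by linarith)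
  have hL2A : 0 ≤ Real.log x ^ (-(2*A)) := Real.rpow_nonneg hlogpos.le _
  by_cases hs : s = 0
  · subst hs
    have h0 : psiHatC Ψ 0 = 1 := by
      haveI := prob hf
      unfold psiHatC
      simp
    simp only [zero_mul, Complex.exp_zero, Finset.sum_const, nsmul_eq_mul, mul_one, h0,
      Complex.zero_im, sub_self, norm_zero, abs_zero]
    have h1 : (0:ℝ) ≤ max C₀ 1 * (2*A*ck + 2*c) := by positivity
    have h2 : (0:ℝ) ≤ (P.card : ℝ) := Nat.cast_nonneg _
    have h3 : (0:ℝ) ≤ 1 + 0 := by norm_num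
    calc (0:ℝ) = 0 * Real.log x ^ (-(2*A)) := by ring
      _ ≤ max C₀ 1 * (2*A*ck + 2*c) * (P.card : ℝ) * (1 + 0) * Real.log x ^ (-(2*A)) := by
          refine mul_le_mul_of_nonneg_right ?_ hL2A
          nlinarith
  -- main case
  have hfp : ∀ p ∈ P, 0 ≤ f p := fun p hp => (hf.pos p ((Finset.mem_filter.mp hp).2)).le
  -- Identity for the prime sum
  have hsum : (∑ p ∈ P, Complex.exp (s * (f p : ℂ)))
      = (P.card : ℂ) + s * ∫ u in Set.Ioi (0:ℝ),
          (∑ p ∈ P, (Set.Iio (f p)).indicator (fun u : ℝ => Complex.exp (s * u)) u) := by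
    rw [integral_finset_sum P (fun p _ => inner_exp_integrable s (f p)), Finset.mul_sum]
    rw [Finset.sum_congr rfl (fun p hp => exp_eq_one_add hs (hfp p hp)),
      Finset.sum_add_distrib, Finset.sum_const, nsmul_eq_mul, mul_one]
  obtain ⟨hWint, hpsi⟩ := psiHatC_eq hf hC₀ hc hΨtail hs hre
  set S : ℝ → ℂ := fun u =>
    ∑ p ∈ P, (Set.Iio (f p)).indicator (fun u : ℝ => Complex.exp (s * u)) u with hSdef
  have hSint : Integrable S (volume.restrict (Set.Ioi (0:ℝ))) :=
    integrable_finset_sum _ (fun p _ => inner_exp_integrable s (f p))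
  set W : ℝ → ℂ := fun u => (1 - Ψ u) • Complex.exp (s * u) with hWdef
  set Hfun : ℝ → ℂ := fun u => S u - (P.card : ℂ) * W u with hHdef
  have hHint : Integrable Hfun (volume.restrict (Set.Ioi (0:ℝ))) :=
    hSint.sub (hWint.const_mul _)
  have hdiff : (∑ p ∈ P, Complex.exp (s * (f p : ℂ))) - (P.card : ℂ) * psiHatC Ψ s
      = s * ∫ u in Set.Ioi (0:ℝ), Hfun u := by
    rw [hsum, hpsi, hHdef]
    rw [integral_sub hSint (hWint.const_mul _), integral_const_mul]
    ring
  -- pointwise description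
  set Cu : ℝ → ℝ := fun u => ((P.filter (fun p => f p ≤ u)).card : ℝ) with hCudef
  have hSval : ∀ u : ℝ, S u
      = Complex.exp (s * u) * (((P.filter (fun p => u < f p)).card : ℕ) : ℂ) := by
    intro u
    rw [hSdef]
    simp only []
    rw [Finset.card_filter]
    push_cast
    rw [Finset.mul_sum]
    refine Finset.sum_congr rfl fun p hp => ?_
    by_cases h : u < f p
    · rw [Set.indicator_of_mem (Set.mem_Iio.mpr h), if_pos h, mul_one]
    · rw [Set.indicator_of_notMem (by simpa using h), if_neg h, mul_zero]
  have hNC : ∀ u : ℝ, (((P.filter (fun p => u < f p)).card : ℝ)) = n - Cu u := by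
    intro u
    have h1 := Finset.card_filter_add_card_filter_not (s := P) (p := fun p => f p ≤ u)
    have h2 : (P.filter (fun p => ¬ f p ≤ u)) = P.filter (fun p => u < f p) := by
      refine Finset.filter_congr fun p _ => ?_
      simp [not_le]
    rw [h2] at h1
    rw [hCudef, hn]
    simp only []
    have := congrArg (fun m : ℕ => (m : ℝ)) h1
    push_cast at this
    linarith
  have hkey : ∀ u : ℝ, Hfun u
      = Complex.exp (s * u) * (((n * Ψ u - Cu u : ℝ)) : ℂ) := by
    intro u
    rw [hHdef]
    simp only []
    rw [hSval u, hWdef]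
    simp only []
    have hsmul : (1 - Ψ u) • Complex.exp (s * u)
        = ((1 - Ψ u : ℝ) : ℂ) * Complex.exp (s * u) := Complex.real_smul
    rw [hsmul]
    have hcast : (((P.filter (fun p => u < f p)).card : ℕ) : ℂ) = ((n - Cu u : ℝ) : ℂ) := by
      rw [← hNC u]
      norm_cast
    rw [hcast, hn]
    push_cast
    ring
  have hnormH : ∀ u : ℝ, ‖Hfun u‖ = Real.exp (s.re * u) * |n * Ψ u - Cu u| := by
    intro u
    rw [hkey u, norm_mul, normExp, Complex.norm_real, Real.norm_eq_abs]
  -- bounds on the count discrepancy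
  have hb1 : ∀ u : ℝ, |n * Ψ u - Cu u| ≤ ck * n * Real.log x ^ (-k) := by
    intro u
    have h := happrox x hx u
    have he : n * Ψ u - Cu u = -(n * (Cu u / n - Ψ u)) := by
      field_simp
      ring
    rw [he, abs_neg, abs_mul, abs_of_pos hnpos]
    calc n * |Cu u / n - Ψ u| ≤ n * (ck * Real.log x ^ (-k)) :=
          mul_le_mul_of_nonneg_left h hnpos.le
      _ = ck * n * Real.log x ^ (-k) := by ring
  have hb2 : ∀ u : ℝ, 0 ≤ u → |n * Ψ u - Cu u| ≤ 2 * c * n * Real.exp (-(C₀+1) * u) := by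
    intro u hu
    have f1 : n - Cu u ≤ c * Real.exp (-(C₀+1) * u) * n := count_ge_le hf (by linarith) htail hx hu
    have f2 : 1 - Ψ u ≤ c * Real.exp (-(C₀+1) * u) := hΨtail u hu
    have f3 : Cu u ≤ n := by
      show (((P.filter (fun p => f p ≤ u)).card : ℝ)) ≤ ((P.card : ℕ) : ℝ)
      exact_mod_cast Finset.card_le_card (Finset.filter_subset _ _)
    have f4 : Ψ u ≤ 1 := psi_le_one hf u
    have f5 : 0 ≤ Ψ u := psi_nonneg hf u
    rw [abs_le]
    constructor <;> nlinarith
  -- splitting point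
  set T : ℝ := max 0 (2*A*loglog x) with hTdef
  have hT0 : 0 ≤ T := le_max_left _ _
  have hHon : IntegrableOn (fun u => ‖Hfun u‖) (Set.Ioi (0:ℝ)) := hHint.norm
  have hsplit : (∫ u in Set.Ioi (0:ℝ), ‖Hfun u‖)
      = (∫ u in Set.Ioc 0 T, ‖Hfun u‖) + ∫ u in Set.Ioi T, ‖Hfun u‖ := by
    rw [← setIntegral_union (Set.Ioc_disjoint_Ioi le_rfl) measurableSet_Ioi
      ((hHon.mono_set Set.Ioc_subset_Ioi_self))
      ((hHon.mono_set (Set.Ioi_subset_Ioi hT0))), Set.Ioc_union_Ioi_eq_Ioi hT0]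
  have hI1 : (∫ u in Set.Ioc 0 T, ‖Hfun u‖)
      ≤ T * (Real.exp (C₀ * T) * (ck * n * Real.log x ^ (-k))) := by
    have hmono := setIntegral_mono_on
      (hHon.mono_set Set.Ioc_subset_Ioi_self)
      (integrableOn_const (C := Real.exp (C₀ * T) * (ck * n * Real.log x ^ (-k)))
        (hs := measure_Ioc_lt_top.ne))
      measurableSet_Ioc
      (fun u hu => by
        show ‖Hfun u‖ ≤ Real.exp (C₀ * T) * (ck * n * Real.log x ^ (-k))
        rw [hnormH u]
        have hu1 : 0 < u := hu.1
        have hu2 : u ≤ T := hu.2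
        have he : Real.exp (s.re * u) ≤ Real.exp (C₀ * T) := by
          apply Real.exp_le_exp.mpr
          have h1 : s.re ≤ C₀ := le_trans (le_abs_self _) hre
          nlinarith
        exact mul_le_mul he (hb1 u) (abs_nonneg _) (Real.exp_pos _).le)
    rw [setIntegral_const, measureReal_def, Real.volume_Ioc, smul_eq_mul] at hmono
    rw [ENNReal.toReal_ofReal (by linarith)] at hmono
    calc (∫ u in Set.Ioc 0 T, ‖Hfun u‖)
        ≤ (T - 0) * (Real.exp (C₀ * T) * (ck * n * Real.log x ^ (-k))) := hmono
      _ = T * (Real.exp (C₀ * T) * (ck * n * Real.log x ^ (-k))) := by ring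
  have hI1' : T * (Real.exp (C₀ * T) * (ck * n * Real.log x ^ (-k)))
      ≤ 2*A*ck * n * Real.log x ^ (-(2*A)) := by
    rcases le_or_gt (loglog x) 0 with h | h
    · have hT : T = 0 := by
        rw [hTdef, max_eq_left]
        nlinarith
      rw [hT, zero_mul]
      refine mul_nonneg (mul_nonneg ?_ hnpos.le) hL2A
      positivity
    · have hT : T = 2*A*loglog x := by
        rw [hTdef, max_eq_right]
        nlinarith
      have hlog1 : 1 < Real.log x := by
        by_contra hcon
        push_neg at hcon
        have : Real.log (Real.log x) ≤ 0 := Real.log_nonpos hlogpos.le hcon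
        rw [loglog] at h
        linarith
      have he1 : Real.exp (C₀ * T) = Real.log x ^ (2*A*C₀) := by
        rw [Real.rpow_def_of_pos hlogpos, hT, loglog]
        congr 1
        ring
      have he2 : Real.log x ^ (2*A*C₀) * Real.log x ^ (-k) = Real.log x ^ (-(2*A+1)) := by
        rw [← Real.rpow_add hlogpos]
        congr 1
        rw [hkdef]
        ring
      have he3 : Real.log x * Real.log x ^ (-(2*A+1)) = Real.log x ^ (-(2*A)) := by
        nth_rewrite 1 [← Real.rpow_one (Real.log x)]
        rw [← Real.rpow_add hlogpos]
        congr 1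
        ring
      have hll : loglog x ≤ Real.log x := by
        rw [loglog]
        exact le_trans (Real.log_le_self hlogpos.le) le_rfl
      calc T * (Real.exp (C₀ * T) * (ck * n * Real.log x ^ (-k)))
          = (2*A*ck*n) * (loglog x * (Real.log x ^ (2*A*C₀) * Real.log x ^ (-k))) := by
            rw [he1, hT]; ring
        _ = (2*A*ck*n) * (loglog x * Real.log x ^ (-(2*A+1))) := by rw [he2]
        _ ≤ (2*A*ck*n) * (Real.log x * Real.log x ^ (-(2*A+1))) := by
            refine mul_le_mul_of_nonneg_left ?_
              (mul_nonneg (by positivity : (0:ℝ) ≤ 2*A*ck) hnpos.le)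
            exact mul_le_mul_of_nonneg_right hll (Real.rpow_nonneg hlogpos.le _)
        _ = 2*A*ck * n * Real.log x ^ (-(2*A)) := by rw [he3]
  have hI2 : (∫ u in Set.Ioi T, ‖Hfun u‖) ≤ 2*c*n * Real.exp (-T) := by
    have hgint : IntegrableOn (fun u : ℝ => 2*c*n * Real.exp (-u)) (Set.Ioi T) := by
      have := exp_neg_integrableOn_Ioi T (b := 1) one_pos
      simp only [neg_one_mul] at this
      exact this.const_mul _
    have hmono := setIntegral_mono_on
      (hHon.mono_set (Set.Ioi_subset_Ioi hT0))
      hgint measurableSet_Ioi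
      (fun u hu => by
        show ‖Hfun u‖ ≤ 2*c*n * Real.exp (-u)
        rw [hnormH u]
        have hu0 : 0 ≤ u := le_trans hT0 (le_of_lt hu)
        have h1 : s.re ≤ C₀ := le_trans (le_abs_self _) hre
        calc Real.exp (s.re * u) * |n * Ψ u - Cu u|
            ≤ Real.exp (C₀ * u) * (2*c*n * Real.exp (-(C₀+1) * u)) := by
              refine mul_le_mul ?_ (hb2 u hu0) (abs_nonneg _) (Real.exp_pos _).le
              exact Real.exp_le_exp.mpr (by nlinarith)
          _ = 2*c*n * Real.exp (-u) := by
              rw [mul_comm (Real.exp (C₀ * u)), mul_assoc, ← Real.exp_add]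
              ring_nf)
    calc (∫ u in Set.Ioi T, ‖Hfun u‖) ≤ ∫ u in Set.Ioi T, 2*c*n * Real.exp (-u) := hmono
      _ = 2*c*n * Real.exp (-T) := by rw [integral_const_mul, integral_exp_neg_Ioi]
  have hexpT : Real.exp (-T) ≤ Real.log x ^ (-(2*A)) := by
    rw [Real.rpow_def_of_pos hlogpos]
    apply Real.exp_le_exp.mpr
    have := le_max_right (0:ℝ) (2*A*loglog x)
    rw [← hTdef] at this
    rw [loglog] at *
    nlinarith
  have htotal : (∫ u in Set.Ioi (0:ℝ), ‖Hfun u‖)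
      ≤ (2*A*ck + 2*c) * n * Real.log x ^ (-(2*A)) := by
    have h2 : 2*c*n * Real.exp (-T) ≤ 2*c*n * Real.log x ^ (-(2*A)) :=
      mul_le_mul_of_nonneg_left hexpT
        (mul_nonneg (by positivity : (0:ℝ) ≤ 2*c) hnpos.le)
    rw [hsplit]
    calc (∫ u in Set.Ioc 0 T, ‖Hfun u‖) + ∫ u in Set.Ioi T, ‖Hfun u‖
        ≤ (2*A*ck * n * Real.log x ^ (-(2*A))) + 2*c*n * Real.log x ^ (-(2*A)) := by
          have := le_trans hI1 hI1'
          linarith [le_trans hI2 h2]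
      _ = (2*A*ck + 2*c) * n * Real.log x ^ (-(2*A)) := by ring
  have habs : ‖s‖ ≤ max C₀ 1 * (1 + |s.im|) := by
    have h1 : ‖s‖ ≤ |s.re| + |s.im| := Complex.norm_le_abs_re_add_abs_im s
    have h2 : C₀ ≤ max C₀ 1 := le_max_left _ _
    have h3 : |s.im| ≤ max C₀ 1 * |s.im| :=
      le_mul_of_one_le_left (abs_nonneg _) (le_max_right _ _)
    calc ‖s‖ ≤ |s.re| + |s.im| := h1
      _ ≤ C₀ + |s.im| := by linarith [hre]
      _ ≤ max C₀ 1 + max C₀ 1 * |s.im| := by linarith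
      _ = max C₀ 1 * (1 + |s.im|) := by ring
  rw [hdiff, norm_mul]
  calc ‖s‖ * ‖∫ u in Set.Ioi (0:ℝ), Hfun u‖
      ≤ ‖s‖ * ∫ u in Set.Ioi (0:ℝ), ‖Hfun u‖ :=
        mul_le_mul_of_nonneg_left (norm_integral_le_integral_norm _) (norm_nonneg s)
    _ ≤ ‖s‖ * ((2*A*ck + 2*c) * n * Real.log x ^ (-(2*A))) :=
        mul_le_mul_of_nonneg_left htotal (norm_nonneg s)
    _ ≤ (max C₀ 1 * (1 + |s.im|)) * ((2*A*ck + 2*c) * n * Real.log x ^ (-(2*A))) := by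
        refine mul_le_mul_of_nonneg_right habs
          (mul_nonneg (mul_nonneg (by positivity : (0:ℝ) ≤ 2*A*ck + 2*c) hnpos.le) hL2A)
    _ = max C₀ 1 * (2*A*ck + 2*c) * n * (1 + |s.im|) * Real.log x ^ (-(2*A)) := by ring
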